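/- arXiv:1410.3718 — 2 statements merged into one kernel-verified Lean document; each statement's English description precedes it below -/
import Mathlib

section
/- The Peregrine breather u_Per(x,t) := (1 − 4(1 + 4it)/(1 + 4x² + 16t²)) · exp(2it) satisfies the focusing cubic nonlinear Schrödinger equation i ∂ₜu_Per(x,t) + ∂ₓₓu_Per(x,t) + 2|u_Per(x,t)|² u_Per(x,t) = 0 for all (x,t) ∈ ℝ × ℝ. -/
open Complex

lemma den_ne (x t : ℝ) : (1 + 4*(x:ℂ)^2 + 16*(t:ℂ)^2) ≠ 0 := by
  have h : (1 + 4*(x:ℂ)^2 + 16*(t:ℂ)^2) = ((1+4*x^2+16*t^2 : ℝ):ℂ) := by push_cast; ring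
  rw [h, Complex.ofReal_ne_zero]; positivity

lemma hasDerivAt_den (t x : ℝ) :
    HasDerivAt (fun ξ:ℝ => 1 + 4*(ξ:ℂ)^2 + 16*(t:ℂ)^2) (8*(x:ℂ)) x := by
  have hx : HasDerivAt (fun ξ:ℝ => (ξ:ℂ)) 1 x := by simpa using (hasDerivAt_id _).ofReal_comp
  have := (((hx.mul hx).const_mul (4:ℂ)).const_add 1).add_const (16*(t:ℂ)^2)
  convert this using 1
  rfl
  · funext ξ; simp only [Pi.mul_apply]; ring
  · ring

lemma hasDerivAt_x (t x : ℝ) :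
    HasDerivAt (fun ξ:ℝ => (1 - 4 * (1 + 4 * Complex.I * (t : ℂ)) / (1 + 4 * (ξ : ℂ) ^ 2 + 16 * (t : ℂ) ^ 2))
        * Complex.exp (2 * Complex.I * t))
      (32*(1+4*Complex.I*(t:ℂ))*(x:ℂ)/(1+4*(x:ℂ)^2+16*(t:ℂ)^2)^2 * Complex.exp (2*Complex.I*t)) x := by
  have hd := hasDerivAt_den t x
  have hq := (hasDerivAt_const x (4*(1+4*Complex.I*(t:ℂ)))).div hd (den_ne x t)
  have := ((hasDerivAt_const x (1:ℂ)).sub hq).mul_const (Complex.exp (2*Complex.I*t))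
  convert this using 1
  rfl
  rfl
  have h := den_ne x t
  field_simp
  ring

lemma hasDerivAt_xx (t x : ℝ) :
    HasDerivAt (fun ξ:ℝ => 32*(1+4*Complex.I*(t:ℂ))*(ξ:ℂ)/(1+4*(ξ:ℂ)^2+16*(t:ℂ)^2)^2 * Complex.exp (2*Complex.I*t))
      (32*(1+4*Complex.I*(t:ℂ))*((1+4*(x:ℂ)^2+16*(t:ℂ)^2) - 16*(x:ℂ)^2)/(1+4*(x:ℂ)^2+16*(t:ℂ)^2)^3 * Complex.exp (2*Complex.I*t)) x := by
  have hx : HasDerivAt (fun ξ:ℝ => (ξ:ℂ)) 1 x := by simpa using (hasDerivAt_id _).ofReal_comp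
  have hd := hasDerivAt_den t x
  have hnum := hx.const_mul (32*(1+4*Complex.I*(t:ℂ)))
  have hden2 := hd.mul hd
  have hden2' : HasDerivAt (fun ξ:ℝ => (1 + 4*(ξ:ℂ)^2 + 16*(t:ℂ)^2)^2)
      (8*(x:ℂ)*(1+4*(x:ℂ)^2+16*(t:ℂ)^2) + (1+4*(x:ℂ)^2+16*(t:ℂ)^2)*(8*(x:ℂ))) x := by
    convert hden2 using 1; rfl; funext ξ; simp only [Pi.mul_apply]; ring
  have hq := hnum.div hden2' (pow_ne_zero 2 (den_ne x t))
  have := hq.mul_const (Complex.exp (2*Complex.I*t))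
  convert this using 1
  rfl
  rfl
  have h := den_ne x t
  field_simp
  ring

lemma hasDerivAt_t (x t : ℝ) :
    HasDerivAt (fun τ:ℝ => (1 - 4 * (1 + 4 * Complex.I * (τ : ℂ)) / (1 + 4 * (x : ℂ) ^ 2 + 16 * (τ : ℂ) ^ 2))
        * Complex.exp (2 * Complex.I * τ))
      (((4*(1+4*Complex.I*(t:ℂ))*(32*(t:ℂ)) - 16*Complex.I*(1+4*(x:ℂ)^2+16*(t:ℂ)^2))/(1+4*(x:ℂ)^2+16*(t:ℂ)^2)^2
        + (1 - 4*(1+4*Complex.I*(t:ℂ))/(1+4*(x:ℂ)^2+16*(t:ℂ)^2))*(2*Complex.I)) * Complex.exp (2*Complex.I*t)) t := by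
  have ht : HasDerivAt (fun τ:ℝ => (τ:ℂ)) 1 t := by simpa using (hasDerivAt_id _).ofReal_comp
  have hnum : HasDerivAt (fun τ:ℝ => 4 * (1 + 4 * Complex.I * (τ:ℂ))) (16*Complex.I) t := by
    have := ((ht.const_mul (4*Complex.I)).const_add 1).const_mul (4:ℂ)
    convert this using 1; rfl; ring
  have hden : HasDerivAt (fun τ:ℝ => 1 + 4*(x:ℂ)^2 + 16*(τ:ℂ)^2) (32*(t:ℂ)) t := by
    have := (((ht.mul ht).const_mul (16:ℂ)).const_add (1 + 4*(x:ℂ)^2))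
    convert this using 1
    rfl
    · funext τ; simp only [Pi.mul_apply]; ring
    · ring
  have hq := hnum.div hden (den_ne x t)
  have hN := (hasDerivAt_const t (1:ℂ)).sub hq
  have hE : HasDerivAt (fun τ:ℝ => Complex.exp (2*Complex.I*(τ:ℂ))) (2*Complex.I*Complex.exp (2*Complex.I*(t:ℂ))) t := by
    have := (ht.const_mul (2*Complex.I)).cexp
    convert this using 1; ring
  have := hN.mul hE
  convert this using 1
  rfl
  rfl
  have h := den_ne x t
  simp only [Pi.sub_apply, Pi.div_apply]
  field_simp
  ring

set_option maxHeartbeats 1000000 in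
/-- The Peregrine breather `u_Per(x,t) = (1 - 4(1+4it)/(1+4x²+16t²)) e^{2it}` solves the
focusing cubic NLS equation `i ∂ₜu + ∂ₓₓu + 2|u|²u = 0`. -/
theorem peregrine_solves_nls
    (uPer : ℝ → ℝ → ℂ)
    (hu : uPer = fun (x t : ℝ) =>
      (1 - 4 * (1 + 4 * Complex.I * (t : ℂ)) / (1 + 4 * (x : ℂ) ^ 2 + 16 * (t : ℂ) ^ 2))
        * Complex.exp (2 * Complex.I * t)) :
    ∀ x t : ℝ, Complex.I * deriv (fun τ => uPer x τ) t
      + deriv (deriv (fun ξ => uPer ξ t)) x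
      + 2 * ((‖uPer x t‖ : ℝ) : ℂ) ^ 2 * uPer x t = 0 := by
  subst hu
  intro x t
  simp only []
  have h1 := (hasDerivAt_t x t).deriv
  have hfun : deriv (fun ξ:ℝ => (1 - 4 * (1 + 4 * Complex.I * (t : ℂ)) / (1 + 4 * (ξ : ℂ) ^ 2 + 16 * (t : ℂ) ^ 2))
        * Complex.exp (2 * Complex.I * t))
      = fun ξ:ℝ => 32*(1+4*Complex.I*(t:ℂ))*(ξ:ℂ)/(1+4*(ξ:ℂ)^2+16*(t:ℂ)^2)^2 * Complex.exp (2*Complex.I*t) :=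
    funext fun ξ => (hasDerivAt_x t ξ).deriv
  have h2 := (hasDerivAt_xx t x).deriv
  rw [h1, hfun, h2]
  -- abs squared
  set u : ℂ := (1 - 4 * (1 + 4 * Complex.I * (t : ℂ)) / (1 + 4 * (x : ℂ) ^ 2 + 16 * (t : ℂ) ^ 2))
        * Complex.exp (2 * Complex.I * t) with hu
  have habs : ((‖u‖ : ℝ):ℂ)^2 = u * (starRingEnd ℂ) u := by
    rw [← Complex.ofReal_pow, Complex.sq_norm, Complex.mul_conj]
  rw [habs]
  have hconj : (starRingEnd ℂ) u
      = (1 - 4 * (1 - 4 * Complex.I * (t : ℂ)) / (1 + 4 * (x : ℂ) ^ 2 + 16 * (t : ℂ) ^ 2))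
        * (Complex.exp (2 * Complex.I * t))⁻¹ := by
    rw [hu, map_mul, ← Complex.exp_conj, ← Complex.exp_neg]
    congr 1
    · simp [map_sub, map_div₀, map_mul, map_add, map_one, map_ofNat, Complex.conj_I, Complex.conj_ofReal]
      ring
    · congr 1
      rw [map_mul, map_mul, Complex.conj_I, Complex.conj_ofReal, map_ofNat]
      ring
  rw [hconj, hu]
  have h := den_ne x t
  have hE := Complex.exp_ne_zero (2*Complex.I*(t:ℂ))
  have hI2 : (Complex.I)^2 = -1 := Complex.I_sq
  have hI3 : (Complex.I)^3 = -Complex.I := by rw [pow_succ, hI2]; ring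
  have hI4 : (Complex.I)^4 = 1 := by rw [pow_succ, hI3]; simp [Complex.I_mul_I]
  have h' : (1 + 4 * (x:ℂ) ^ 2 + (t:ℂ) ^ 2 * 16) ≠ 0 := by convert h using 2; ring
  field_simp
  ring_nf
  simp only [hI2, hI3, hI4]
  ring
end

section
/- Let u_Per(x,t) := (1 − 4(1 + 4it)/(1 + 4x² + 16t²)) · exp(2it). Then for every t ∈ ℝ, the function x ↦ |∂ₓu_Per(x,t)|² − |u_Per(x,t)|² (|u_Per(x,t)|² − 1) is integrable on ℝ and the energy E(t) := (1/2) ∫_ℝ ( |∂ₓu_Per(x,t)|² − |u_Per(x,t)|² (|u_Per(x,t)|² − 1) ) dx equals 0. -/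
open MeasureTheory

noncomputable def perD (t x : ℝ) : ℝ := 4*x^2 + (1+16*t^2)
noncomputable def perN (t x : ℝ) : ℝ := (perD t x - 4)^2 + 256*t^2
noncomputable def perg (t x : ℝ) : ℝ :=
  1024*x^2*(1+16*t^2)/(perD t x)^4 - (perN t x/(perD t x)^2)*(perN t x/(perD t x)^2 - 1)
noncomputable def perP (t x : ℝ) : ℝ :=
  8*(4*x^2)^3 + 8*((1+16*t^2)-8)*(4*x^2)^2
    + (384*(1+16*t^2)-8*(1+16*t^2)^2)*(4*x^2) - 8*(1+16*t^2)^2*((1+16*t^2)+8)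
noncomputable def perF (t x : ℝ) : ℝ :=
  (-384*x^5 + ((256-192*(1+16*t^2))*x^3 + (-(24*(1+16*t^2)^2+192*(1+16*t^2)))*x))
    / (3*(perD t x)^3)

lemma perD_ge (t x : ℝ) : 1 + x^2 ≤ perD t x := by
  unfold perD; nlinarith [sq_nonneg x, sq_nonneg t]

lemma perD_pos (t x : ℝ) : 0 < perD t x :=
  lt_of_lt_of_le (by positivity) (perD_ge t x)

lemma perg_eq (t x : ℝ) : perg t x = perP t x / (perD t x)^4 := by
  have h := (perD_pos t x).ne'
  unfold perg perP perN
  field_simp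
  unfold perD
  ring

lemma perP_abs (t x : ℝ) : |perP t x| ≤ 328 * (perD t x)^3 := by
  have hy : (0:ℝ) ≤ x^2 := sq_nonneg x
  have hs : (0:ℝ) ≤ t^2 := sq_nonneg t
  rw [abs_le]
  constructor <;>
  · unfold perP perD
    nlinarith [mul_nonneg hy hs, mul_nonneg (mul_nonneg hy hy) hs,
      mul_nonneg hy (mul_nonneg hs hs), mul_nonneg (mul_nonneg hy hy) hy,
      mul_nonneg (mul_nonneg hs hs) hs, mul_nonneg hy hy, mul_nonneg hs hs,
      mul_nonneg (mul_nonneg hy hs) hs, mul_nonneg (mul_nonneg hy hy) (mul_nonneg hs hs)]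

lemma perg_bound (t x : ℝ) : |perg t x| ≤ 328 * (1+x^2)⁻¹ := by
  have hD := perD_pos t x
  have h1 : (0:ℝ) < 1 + x^2 := by positivity
  have hD4 : (0:ℝ) < (perD t x)^4 := by positivity
  have key : |perP t x| * (1+x^2) ≤ 328 * (perD t x)^4 :=
    calc |perP t x| * (1+x^2) ≤ (328 * (perD t x)^3) * perD t x :=
          mul_le_mul (perP_abs t x) (perD_ge t x) h1.le (by positivity)
      _ = 328 * (perD t x)^4 := by ring
  rw [perg_eq, abs_div, abs_of_pos hD4, div_le_iff₀ hD4]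
  calc |perP t x| ≤ 328 * (perD t x)^4 / (1+x^2) := (le_div_iff₀ h1).mpr key
    _ = 328 * (1+x^2)⁻¹ * (perD t x)^4 := by ring

lemma perg_integrable (t : ℝ) : Integrable (perg t) := by
  have hc : Continuous (perg t) := by
    have h : Continuous fun x => perP t x / (perD t x)^4 := by
      apply Continuous.div
      · unfold perP; fun_prop
      · unfold perD; fun_prop
      · exact fun x => by have := perD_pos t x; positivity
    exact (funext (perg_eq t) : perg t = _) ▸ h
  refine (integrable_inv_one_add_sq.const_mul 328).mono hc.aestronglyMeasurable
    (ae_of_all _ fun x => ?_)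
  rw [Real.norm_eq_abs, Real.norm_eq_abs,
    abs_of_nonneg (show (0:ℝ) ≤ 328 * (1+x^2)⁻¹ by positivity)]
  exact perg_bound t x

lemma perD_hasDeriv (t x : ℝ) : HasDerivAt (perD t) (8*x) x := by
  have h := ((hasDerivAt_pow 2 x).const_mul (4:ℝ)).add_const (1+16*t^2)
  refine h.congr_deriv (Eq.symm ?_)
  norm_num; ring

lemma perF_hasDeriv (t x : ℝ) : HasDerivAt (perF t) (perg t x) x := by
  have hD := perD_pos t x
  have hne : (3*(perD t x)^3) ≠ 0 := by positivity
  have hnum : HasDerivAt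
      (fun x : ℝ => -384*x^5 + ((256-192*(1+16*t^2))*x^3 + (-(24*(1+16*t^2)^2+192*(1+16*t^2)))*x))
      (-1920*x^4 + (3*(256-192*(1+16*t^2))*x^2 + (-(24*(1+16*t^2)^2+192*(1+16*t^2))))) x := by
    have h := ((hasDerivAt_pow 5 x).const_mul (-384:ℝ)).add
      (((hasDerivAt_pow 3 x).const_mul ((256-192*(1+16*t^2)):ℝ)).add
        ((hasDerivAt_id x).const_mul ((-(24*(1+16*t^2)^2+192*(1+16*t^2))):ℝ)))
    refine h.congr_deriv (Eq.symm ?_)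
    push_cast
    ring
  have hden : HasDerivAt (fun x => 3*(perD t x)^3) (3*(3*(perD t x)^2*(8*x))) x :=
    ((perD_hasDeriv t x).pow 3).const_mul 3
  have h := hnum.div hden hne
  refine h.congr_deriv (Eq.symm ?_)
  rw [perg_eq]
  unfold perP
  field_simp
  unfold perD
  ring

lemma perF_zero (t : ℝ) : perF t 0 = 0 := by
  unfold perF; norm_num

lemma perF_tendsto_atTop (t : ℝ) : Filter.Tendsto (perF t) Filter.atTop (nhds 0) := by
  have h1 : Filter.Tendsto (fun x : ℝ => x⁻¹) Filter.atTop (nhds 0) := tendsto_inv_atTop_zero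
  have hnum : Filter.Tendsto
      (fun x : ℝ => -384*x⁻¹ + ((256-192*(1+16*t^2))*(x⁻¹)^3
        + (-(24*(1+16*t^2)^2+192*(1+16*t^2)))*(x⁻¹)^5))
      Filter.atTop (nhds (-384*0 + ((256-192*(1+16*t^2))*0^3
        + (-(24*(1+16*t^2)^2+192*(1+16*t^2)))*0^5))) :=
    ((h1.const_mul _).add (((h1.pow 3).const_mul _).add ((h1.pow 5).const_mul _)))
  have hden : Filter.Tendsto (fun x : ℝ => 3*(4 + (1+16*t^2)*(x⁻¹)^2)^3)
      Filter.atTop (nhds (3*(4 + (1+16*t^2)*0^2)^3)) :=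
    ((tendsto_const_nhds.add ((h1.pow 2).const_mul _)).pow 3).const_mul 3
  norm_num at hnum hden
  have hG := hnum.div hden (by norm_num)
  norm_num at hG
  refine hG.congr' ?_
  filter_upwards [Filter.eventually_ge_atTop 1] with x hx
  have hx0 : x ≠ 0 := by linarith
  have hD := (perD_pos t x).ne'
  have hd2 : (3:ℝ)*(perD t x)^3 ≠ 0 := by
    exact mul_ne_zero three_ne_zero (pow_ne_zero _ hD)
  simp only [Pi.div_apply]
  unfold perF perD at *
  field_simp
  ring

lemma perF_tendsto_atBot (t : ℝ) : Filter.Tendsto (perF t) Filter.atBot (nhds 0) := by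
  have h1 : Filter.Tendsto (fun x : ℝ => x⁻¹) Filter.atBot (nhds 0) := by
    have hneg : Filter.Tendsto (fun x : ℝ => -x) Filter.atBot Filter.atTop :=
      Filter.tendsto_neg_atBot_atTop
    have h := (tendsto_inv_atTop_zero.comp hneg).neg
    rw [neg_zero] at h
    refine h.congr fun x => ?_
    simp [Function.comp, inv_neg]
  have hnum : Filter.Tendsto
      (fun x : ℝ => -384*x⁻¹ + ((256-192*(1+16*t^2))*(x⁻¹)^3
        + (-(24*(1+16*t^2)^2+192*(1+16*t^2)))*(x⁻¹)^5))
      Filter.atBot (nhds (-384*0 + ((256-192*(1+16*t^2))*0^3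
        + (-(24*(1+16*t^2)^2+192*(1+16*t^2)))*0^5))) :=
    ((h1.const_mul _).add (((h1.pow 3).const_mul _).add ((h1.pow 5).const_mul _)))
  have hden : Filter.Tendsto (fun x : ℝ => 3*(4 + (1+16*t^2)*(x⁻¹)^2)^3)
      Filter.atBot (nhds (3*(4 + (1+16*t^2)*0^2)^3)) :=
    ((tendsto_const_nhds.add ((h1.pow 2).const_mul _)).pow 3).const_mul 3
  norm_num at hnum hden
  have hG := hnum.div hden (by norm_num)
  norm_num at hG
  refine hG.congr' ?_
  filter_upwards [Filter.eventually_le_atBot (-1)] with x hx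
  have hx0 : x ≠ 0 := by linarith
  have hD := (perD_pos t x).ne'
  have hd2 : (3:ℝ)*(perD t x)^3 ≠ 0 := by
    exact mul_ne_zero three_ne_zero (pow_ne_zero _ hD)
  simp only [Pi.div_apply]
  unfold perF perD at *
  field_simp
  ring

lemma perg_integral (t : ℝ) : ∫ x : ℝ, perg t x = 0 := by
  have hi := perg_integrable t
  have h1 : ∫ x in Set.Ioi (0:ℝ), perg t x = 0 - perF t 0 :=
    MeasureTheory.integral_Ioi_of_hasDerivAt_of_tendsto'
      (fun x _ => perF_hasDeriv t x) hi.integrableOn (perF_tendsto_atTop t)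
  have h2 : ∫ x in Set.Iic (0:ℝ), perg t x = perF t 0 - 0 :=
    MeasureTheory.integral_Iic_of_hasDerivAt_of_tendsto'
      (fun x _ => perF_hasDeriv t x) hi.integrableOn (perF_tendsto_atBot t)
  rw [← intervalIntegral.integral_Iic_add_Ioi hi.integrableOn hi.integrableOn, h1, h2,
    perF_zero]
  ring

/-- The energy density of the Peregrine breather is integrable on `ℝ` and the energy
`E = (1/2)∫ (|u_x|² - |u|²(|u|² - 1)) dx` vanishes. -/
theorem peregrine_energy_zero
    (uPer : ℝ → ℝ → ℂ)
    (hu : uPer = fun (x t : ℝ) =>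
      (1 - 4 * (1 + 4 * Complex.I * (t : ℂ)) / (1 + 4 * (x : ℂ) ^ 2 + 16 * (t : ℂ) ^ 2))
        * Complex.exp (2 * Complex.I * t)) :
    ∀ t : ℝ,
      Integrable (fun x : ℝ =>
        ‖deriv (fun ξ => uPer ξ t) x‖ ^ 2
          - ‖uPer x t‖ ^ 2 * (‖uPer x t‖ ^ 2 - 1))
      ∧ (1 / 2) * (∫ x : ℝ,
          (‖deriv (fun ξ => uPer ξ t) x‖ ^ 2
            - ‖uPer x t‖ ^ 2 * (‖uPer x t‖ ^ 2 - 1))) = 0 := by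
  intro t
  have key : (fun x : ℝ =>
      ‖deriv (fun ξ => uPer ξ t) x‖ ^ 2
        - ‖uPer x t‖ ^ 2 * (‖uPer x t‖ ^ 2 - 1)) = perg t := by
    funext x
    have hD0 := perD_pos t x
    have hDC : ((1:ℂ) + 4*(x:ℂ)^2 + 16*(t:ℂ)^2) = ((perD t x : ℝ) : ℂ) := by
      unfold perD; push_cast; ring
    have hDne : ((perD t x : ℝ) : ℂ) ≠ 0 := by
      exact_mod_cast hD0.ne'
    have hne' : ((1:ℂ) + 4*(x:ℂ)^2 + 16*(t:ℂ)^2) ≠ 0 := hDC ▸ hDne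
    have habs_exp : ‖Complex.exp (2*Complex.I*(t:ℂ))‖ = 1 := by
      rw [Complex.norm_exp]; simp
    -- the derivative
    have h1 : HasDerivAt (fun z : ℂ => (1:ℂ) + 4*z^2 + 16*(t:ℂ)^2) (8*(x:ℂ)) (x:ℂ) := by
      have h := ((hasDerivAt_pow 2 ((x:ℝ):ℂ)).const_mul (4:ℂ)).const_add 1 |>.add_const
        (16*(t:ℂ)^2)
      refine h.congr_deriv (Eq.symm ?_)
      push_cast; ring
    have h2 : HasDerivAt (fun z : ℂ => 4 * (1 + 4 * Complex.I * (t:ℂ)) / (1 + 4*z^2 + 16*(t:ℂ)^2))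
        ((0 * (1 + 4*(x:ℂ)^2 + 16*(t:ℂ)^2) - 4 * (1 + 4 * Complex.I * (t:ℂ)) * (8*(x:ℂ)))
          / (1 + 4*(x:ℂ)^2 + 16*(t:ℂ)^2)^2) (x:ℂ) :=
      (hasDerivAt_const ((x:ℝ):ℂ) (4 * (1 + 4 * Complex.I * (t:ℂ)))).div h1 hne'
    have h3 := ((hasDerivAt_const ((x:ℝ):ℂ) (1:ℂ)).sub h2).mul_const
      (Complex.exp (2*Complex.I*(t:ℂ)))
    have h4 := h3.comp_ofReal
    have hder : HasDerivAt (fun ξ : ℝ => uPer ξ t)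
        ((32*(x:ℂ)*(1 + 4*Complex.I*(t:ℂ))) / ((perD t x : ℝ):ℂ)^2
          * Complex.exp (2*Complex.I*(t:ℂ))) x := by
      rw [hu]
      refine h4.congr_deriv (Eq.symm ?_)
      rw [← hDC]
      field_simp
      ring
    have hderiv_eq := hder.deriv
    have habs1 : ‖(32*(x:ℂ)*(1 + 4*Complex.I*(t:ℂ))) / ((perD t x : ℝ):ℂ)^2
          * Complex.exp (2*Complex.I*(t:ℂ))‖ ^ 2 = 1024*x^2*(1+16*t^2)/(perD t x)^4 := by
      rw [norm_mul, habs_exp, mul_one, norm_div, norm_pow, Complex.norm_real, Real.norm_eq_abs,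
        abs_of_pos hD0, div_pow, Complex.sq_norm,
        show (32*(x:ℂ)*(1 + 4*Complex.I*(t:ℂ)))
          = ((32*x : ℝ):ℂ) + ((128*x*t : ℝ):ℂ)*Complex.I by push_cast; ring,
        Complex.normSq_add_mul_I]
      ring
    have huval : uPer x t = (((perD t x - 4 : ℝ):ℂ) + ((-16*t : ℝ):ℂ)*Complex.I)
        / ((perD t x : ℝ):ℂ) * Complex.exp (2*Complex.I*(t:ℂ)) := by
      rw [hu]
      simp only
      rw [hDC]
      field_simp
      push_cast
      ring
    have habs2 : ‖uPer x t‖ ^ 2 = perN t x/(perD t x)^2 := by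
      rw [huval, norm_mul, habs_exp, mul_one, norm_div, Complex.norm_real, Real.norm_eq_abs,
        abs_of_pos hD0, div_pow, Complex.sq_norm, Complex.normSq_add_mul_I]
      unfold perN
      ring
    rw [hderiv_eq, habs1, habs2]
    unfold perg
    ring
  constructor
  · exact key ▸ perg_integrable t
  · rw [key, perg_integral t]
    norm_num
end
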